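/- There is a universal constant C > 0 with the following property. For every τ ∈ (0,1), every horizontally valid two-dimensional move g with g + gᵀ = t_τ, and every a ∈ [3,5]: ∑_{b : |b − a| < C·√τ} ĝ_b(a,a) ≥ 2/3, where the sum ranges over the (finitely many) values b ≥ 0 with |b − a| < C·√τ for which g_b is nonzero. -/

import Mathlib

open scoped BigOperators Classical

noncomputable section

/-- The profile `P_x` of a point `x ∈ ℝ≥0`, viewed as a function on `[1,∞]`
(the extended reals `EReal` model the interval with its point `∞ = ⊤`):
`P_x(α) = 1` for `α ∈ [1,2)`, `P_x(α) = (xα - x)/(x + α - 2)` for `α ∈ [2,∞)`,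
and `P_x(∞) = x` (with the conventions `P_0(α) = 0` for `α ∈ [2,∞]`, which the
formula also yields since division by zero is zero). -/
def Pfun (x : ℝ) (α : EReal) : ℝ :=
  if α = ⊤ then x
  else if α.toReal < 2 then 1
  else (x * α.toReal - x) / (x + α.toReal - 2)

/-- A one-dimensional move: a finitely supported function on `ℝ≥0`
(modeled as a function on `ℝ` vanishing on the negatives). -/
def IsMove1 (f : ℝ → ℝ) : Prop :=
  (Function.support f).Finite ∧ ∀ x : ℝ, x < 0 → f x = 0

/-- Validity of a one-dimensional move. -/
def IsValid1 (f : ℝ → ℝ) : Prop :=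
  (∑ᶠ x, f x) = 0 ∧
  (∀ lam : ℝ, 0 < lam → 0 ≤ ∑ᶠ x, (x / (x + lam)) * f x) ∧
  0 ≤ ∑ᶠ x, x * f x

/-- The profile of a one-dimensional move. -/
def prof1 (f : ℝ → ℝ) (α : EReal) : ℝ := ∑ᶠ x, f x * Pfun x α

/-- A two-dimensional move: a finitely supported function on `ℝ≥0 × ℝ≥0`. -/
def IsMove2 (q : ℝ × ℝ → ℝ) : Prop :=
  (Function.support q).Finite ∧ ∀ p : ℝ × ℝ, p.1 < 0 ∨ p.2 < 0 → q p = 0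

/-- A two-dimensional move is horizontally valid if all of its rows are valid. -/
def HorizValid (q : ℝ × ℝ → ℝ) : Prop := ∀ y : ℝ, IsValid1 fun x => q (x, y)

/-- A two-dimensional move is vertically valid if all of its columns are valid. -/
def VertValid (q : ℝ × ℝ → ℝ) : Prop := ∀ x : ℝ, IsValid1 fun y => q (x, y)

/-- The two-variable profile of a two-dimensional move. -/
def prof2 (q : ℝ × ℝ → ℝ) (α β : EReal) : ℝ :=
  ∑ᶠ p : ℝ × ℝ, q p * Pfun p.1 α * Pfun p.2 β

/-- The transpose move `qᵀ(x,y) = q(y,x)`. -/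
def transpose (q : ℝ × ℝ → ℝ) : ℝ × ℝ → ℝ := fun p => q (p.2, p.1)

/-- `pt x y` is the indicator move `⟦x,y⟧`. -/
def pt (x y : ℝ) : ℝ × ℝ → ℝ := fun p => if p = (x, y) then 1 else 0

/-- The move `t_τ = 2·⟦1,1⟧ - ⟦2-τ,0⟧ - ⟦0,2-τ⟧`. -/
def tMove (τ : ℝ) : ℝ × ℝ → ℝ :=
  fun p => 2 * pt 1 1 p - pt (2 - τ) 0 p - pt 0 (2 - τ) p

/-- `slice g b` is the move `g_b`: the part of `g` on the horizontal line `y = b`. -/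
def hslice (g : ℝ × ℝ → ℝ) (b : ℝ) : ℝ × ℝ → ℝ := fun p => if p.2 = b then g p else 0

set_option maxHeartbeats 4000000 in
/-- The isolating function: there is a universal constant `C > 0` such that
for every `τ ∈ (0,1)`, every horizontally valid move `g` with `g + gᵀ = t_τ`,
and every `a ∈ [3,5]`, the slices `g_b` with `|b - a| < C√τ` contribute at
least `2/3` to `ĝ(a,a)`. -/
theorem stmt_16 :
    ∃ C : ℝ, 0 < C ∧
      ∀ τ : ℝ, τ ∈ Set.Ioo (0 : ℝ) 1 →
      ∀ g : ℝ × ℝ → ℝ, IsMove2 g → HorizValid g →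
        (∀ p, g p + transpose g p = tMove τ p) →
      ∀ a : ℝ, 3 ≤ a → a ≤ 5 →
        (2 / 3 : ℝ) ≤
          ∑ᶠ b ∈ {b : ℝ | |b - a| < C * Real.sqrt τ},
            prof2 (hslice g b) ((a : ℝ) : EReal) ((a : ℝ) : EReal) := by
  classical
  refine ⟨1000, by norm_num, ?_⟩
  rintro τ ⟨hτ0, hτ1⟩ g hg hval hsym a ha3 ha5
  obtain ⟨hfin, hneg⟩ := hg
  set s : Finset (ℝ × ℝ) :=
    (hfin.toFinset ∪ hfin.toFinset.image Prod.swap) ∪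
      {(1, 1), (2 - τ, 0), (0, 2 - τ)} with hs
  have hsupp : ∀ p : ℝ × ℝ, g p ≠ 0 → p ∈ s := by
    intro p hp
    exact Finset.mem_union_left _ (Finset.mem_union_left _ (hfin.mem_toFinset.2 hp))
  have hmem1 : ((1 : ℝ), (1 : ℝ)) ∈ s := by
    apply Finset.mem_union_right; simp
  have hmem2 : ((2 - τ : ℝ), (0 : ℝ)) ∈ s := by
    apply Finset.mem_union_right; simp
  have hmem3 : ((0 : ℝ), (2 - τ : ℝ)) ∈ s := by
    apply Finset.mem_union_right; simp
  have hswap : ∀ p ∈ s, Prod.swap p ∈ s := by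
    intro p hp
    rcases Finset.mem_union.1 hp with hp | hp
    · rcases Finset.mem_union.1 hp with hp | hp
      · exact Finset.mem_union_left _ (Finset.mem_union_right _
          (Finset.mem_image.2 ⟨p, hp, rfl⟩))
      · rcases Finset.mem_image.1 hp with ⟨q, hq, rfl⟩
        rw [Prod.swap_swap]
        exact Finset.mem_union_left _ (Finset.mem_union_left _ hq)
    · simp only [Finset.mem_insert, Finset.mem_singleton] at hp
      rcases hp with rfl | rfl | rfl
      · simpa using hmem1
      · simpa using hmem3
      · simpa using hmem2
  have hposs : ∀ p ∈ s, 0 ≤ p.1 ∧ 0 ≤ p.2 := by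
    have hsup : ∀ p : ℝ × ℝ, g p ≠ 0 → 0 ≤ p.1 ∧ 0 ≤ p.2 := by
      intro p hp
      constructor
      · by_contra h; exact hp (hneg p (Or.inl (by linarith [not_le.1 h])))
      · by_contra h; exact hp (hneg p (Or.inr (by linarith [not_le.1 h])))
    intro p hp
    rcases Finset.mem_union.1 hp with hp | hp
    · rcases Finset.mem_union.1 hp with hp | hp
      · exact hsup p (hfin.mem_toFinset.1 hp)
      · rcases Finset.mem_image.1 hp with ⟨q, hq, rfl⟩
        have := hsup q (hfin.mem_toFinset.1 hq)
        exact ⟨this.2, this.1⟩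
    · simp only [Finset.mem_insert, Finset.mem_singleton] at hp
      rcases hp with rfl | rfl | rfl <;> constructor <;> simp <;> linarith
  set X : Finset ℝ := s.image Prod.fst with hX
  set B : Finset ℝ := s.image Prod.snd with hB
  have hsubXB : s ⊆ X ×ˢ B := by
    intro p hp
    exact Finset.mem_product.2 ⟨Finset.mem_image.2 ⟨p, hp, rfl⟩,
      Finset.mem_image.2 ⟨p, hp, rfl⟩⟩
  have hB0 : ∀ b ∈ B, (0 : ℝ) ≤ b := by
    intro b hb
    rcases Finset.mem_image.1 hb with ⟨p, hp, rfl⟩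
    exact (hposs p hp).2
  have hgrow : ∀ b x : ℝ, g (x, b) ≠ 0 → x ∈ X ∧ b ∈ B := by
    intro b x hx
    have := hsupp _ hx
    exact ⟨Finset.mem_image.2 ⟨(x, b), this, rfl⟩, Finset.mem_image.2 ⟨(x, b), this, rfl⟩⟩
  -- the real profile function
  set Pa : ℝ → ℝ := fun x => (x * a - x) / (x + a - 2) with hPadef
  have hPfun : ∀ x : ℝ, Pfun x ((a : ℝ) : EReal) = Pa x := by
    intro x
    rw [Pfun, if_neg (EReal.coe_ne_top a)]
    rw [EReal.toReal_coe, if_neg (by push_neg; linarith)]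
  have hPa1 : Pa 1 = 1 := by
    rw [hPadef]
    simp only
    rw [show (1 : ℝ) * a - 1 = a - 1 by ring, show (1 : ℝ) + a - 2 = a - 1 by ring]
    exact div_self (by linarith)
  have hPa0 : Pa 0 = 0 := by
    rw [hPadef]; simp
  have hPa_nonneg : ∀ b : ℝ, 0 ≤ b → 0 ≤ Pa b := by
    intro b hb
    rw [hPadef]
    simp only
    apply div_nonneg
    · linarith [mul_nonneg hb (show (0:ℝ) ≤ a - 1 by linarith)]
    · linarith
  -- row quantities
  set μ : ℝ → ℝ := fun b => ∑ x ∈ X, g (x, b) * Pa x with hμdef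
  set Sf : ℝ → ℝ := fun b => ∑ x ∈ X, g (x, b) * (x / (x + (a - 2))) with hSdef
  set mf : ℝ → ℝ := fun b => ∑ x ∈ X, g (x, b) * x with hmdef
  have hrow_supp : ∀ (b : ℝ) (w : ℝ → ℝ),
      Function.support (fun x => w x * g (x, b)) ⊆ ↑X := by
    intro b w x hx
    have hgx : g (x, b) ≠ 0 := by
      intro h0; apply hx; simp [Function.mem_support, h0]
    exact (hgrow b x hgx).1
  have hrow0 : ∀ b : ℝ, ∑ x ∈ X, g (x, b) = 0 := by
    intro b
    have h1 := (hval b).1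
    have h2 : Function.support (fun x => g (x, b)) ⊆ ↑X := by
      intro x hx; exact (hgrow b x hx).1
    rw [finsum_eq_sum_of_support_subset _ h2] at h1
    exact h1
  have hrowS : ∀ b : ℝ, 0 ≤ Sf b := by
    intro b
    have h1 := (hval b).2.1 (a - 2) (by linarith)
    rw [finsum_eq_sum_of_support_subset _ (hrow_supp b (fun x => x / (x + (a - 2))))] at h1
    rw [hSdef]
    simp only
    calc (0:ℝ) ≤ ∑ x ∈ X, x / (x + (a - 2)) * g (x, b) := h1
    _ = ∑ x ∈ X, g (x, b) * (x / (x + (a - 2))) := by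
        apply Finset.sum_congr rfl; intros; ring
  have hrowm : ∀ b : ℝ, 0 ≤ mf b := by
    intro b
    have h1 := (hval b).2.2
    rw [finsum_eq_sum_of_support_subset _ (hrow_supp b (fun x => x))] at h1
    rw [hmdef]
    simp only
    calc (0:ℝ) ≤ ∑ x ∈ X, x * g (x, b) := h1
    _ = ∑ x ∈ X, g (x, b) * x := by
        apply Finset.sum_congr rfl; intros; ring
  -- grouping
  have hgroup : ∀ F G : ℝ → ℝ,
      ∑ p ∈ s, g p * (F p.1 * G p.2) =
        ∑ b ∈ B, G b * ∑ x ∈ X, g (x, b) * F x := by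
    intro F G
    rw [Finset.sum_subset hsubXB (by
      intro p _ hps
      have : g p = 0 := by by_contra h; exact hps (hsupp p h)
      rw [this, zero_mul])]
    rw [Finset.sum_product]
    rw [Finset.sum_comm]
    apply Finset.sum_congr rfl
    intro b _
    rw [Finset.mul_sum]
    apply Finset.sum_congr rfl
    intro x _
    ring
  -- symmetrization
  have hsymsum : ∀ W : ℝ × ℝ → ℝ, (∀ x y : ℝ, W (x, y) = W (y, x)) →
      2 * ∑ p ∈ s, g p * W p = 2 * W (1, 1) - W (2 - τ, 0) - W (0, 2 - τ) := by
    intro W hW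
    have htrans : ∑ p ∈ s, transpose g p * W p = ∑ p ∈ s, g p * W p := by
      apply Finset.sum_nbij' (i := Prod.swap) (j := Prod.swap)
      · intro p hp; exact hswap p hp
      · intro p hp; exact hswap p hp
      · intro p _; exact Prod.swap_swap p
      · intro p _; exact Prod.swap_swap p
      · rintro ⟨x, y⟩ _
        show transpose g (x, y) * W (x, y) = g (y, x) * W (y, x)
        rw [transpose]
        rw [hW x y]
    have h2 : ∑ p ∈ s, (g p + transpose g p) * W p
        = ∑ p ∈ s, g p * W p + ∑ p ∈ s, transpose g p * W p := by
      rw [← Finset.sum_add_distrib]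
      apply Finset.sum_congr rfl
      intro p _; ring
    have h2' : 2 * ∑ p ∈ s, g p * W p
        = ∑ p ∈ s, (g p + transpose g p) * W p := by
      rw [h2, htrans]; ring
    rw [h2']
    have h3 : ∀ p ∈ s, (g p + transpose g p) * W p =
        (if p = ((1:ℝ), (1:ℝ)) then 2 * W p else 0) -
        ((if p = ((2 - τ : ℝ), (0:ℝ)) then W p else 0) +
         (if p = ((0:ℝ), (2 - τ : ℝ)) then W p else 0)) := by
      intro p _
      rw [hsym p, tMove, pt, pt, pt]
      split_ifs <;> ring
    rw [Finset.sum_congr rfl h3]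
    rw [Finset.sum_sub_distrib, Finset.sum_add_distrib]
    rw [Finset.sum_ite_eq' s ((1:ℝ), (1:ℝ)) (fun p => 2 * W p)]
    rw [Finset.sum_ite_eq' s ((2 - τ:ℝ), (0:ℝ)) W]
    rw [Finset.sum_ite_eq' s ((0:ℝ), (2 - τ:ℝ)) W]
    rw [if_pos hmem1, if_pos hmem2, if_pos hmem3]
    ring
  -- K1 : ∑_B Pa b * μ b = 1
  have hK1 : ∑ b ∈ B, Pa b * μ b = 1 := by
    have h1 := hsymsum (fun p => Pa p.1 * Pa p.2) (fun x y => by simp only; ring)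
    have h2 := hgroup Pa Pa
    simp only at h1
    rw [h2] at h1
    rw [hPa1, hPa0] at h1
    have h3 : ∑ b ∈ B, Pa b * ∑ x ∈ X, g (x, b) * Pa x = ∑ b ∈ B, Pa b * μ b := by
      apply Finset.sum_congr rfl; intro b _; rw [hμdef]
    rw [h3] at h1
    linarith [h1]
  -- K2 : ∑_B Sf b = 2/(a-1) - (2-τ)/(a-τ)
  have hK2 : ∑ b ∈ B, Sf b = 2 / (a - 1) - (2 - τ) / (a - τ) := by
    have h1 := hsymsum (fun p => p.1 / (p.1 + (a - 2)) + p.2 / (p.2 + (a - 2)))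
      (fun x y => by simp only; ring)
    simp only at h1
    have hsplit : ∑ p ∈ s, g p * (p.1 / (p.1 + (a - 2)) + p.2 / (p.2 + (a - 2)))
        = ∑ p ∈ s, g p * ((p.1 / (p.1 + (a - 2))) * 1)
          + ∑ p ∈ s, g p * (1 * (p.2 / (p.2 + (a - 2)))) := by
      rw [← Finset.sum_add_distrib]
      apply Finset.sum_congr rfl; intro p _; ring
    rw [hsplit] at h1
    rw [hgroup (fun x => x / (x + (a - 2))) (fun _ => 1)] at h1
    rw [hgroup (fun _ => 1) (fun y => y / (y + (a - 2)))] at h1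
    have e1 : ∑ b ∈ B, (1 : ℝ) * ∑ x ∈ X, g (x, b) * (x / (x + (a - 2)))
        = ∑ b ∈ B, Sf b := by
      apply Finset.sum_congr rfl; intro b _; rw [hSdef]; ring
    have e2 : ∑ b ∈ B, (b / (b + (a - 2))) * ∑ x ∈ X, g (x, b) * 1
        = 0 := by
      apply Finset.sum_eq_zero; intro b _
      have : ∑ x ∈ X, g (x, b) * 1 = 0 := by
        simpa using hrow0 b
      rw [this, mul_zero]
    rw [e1, e2] at h1
    have hz : (0:ℝ) / (0 + (a - 2)) = 0 := by simp
    rw [hz] at h1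
    have h1' : 2 * ∑ b ∈ B, Sf b =
        2 * (1 / (1 + (a - 2)) + 1 / (1 + (a - 2)))
        - ((2 - τ) / (2 - τ + (a - 2)) + 0) - (0 + (2 - τ) / (2 - τ + (a - 2))) := by
      linarith [h1]
    have hd1 : (1:ℝ) + (a - 2) = a - 1 := by ring
    have hd2 : (2:ℝ) - τ + (a - 2) = a - τ := by ring
    rw [hd1, hd2] at h1'
    have hone : (1:ℝ) / (a - 1) + 1 / (a - 1) = 2 / (a-1) := by ring
    linarith [h1']
  -- K3 : ∑_B b * μ b + ∑_B Pa b * mf b = 2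
  have hK3 : ∑ b ∈ B, b * μ b + ∑ b ∈ B, Pa b * mf b = 2 := by
    have h1 := hsymsum (fun p => p.2 * Pa p.1 + p.1 * Pa p.2)
      (fun x y => by simp only; ring)
    simp only at h1
    have hsplit : ∑ p ∈ s, g p * (p.2 * Pa p.1 + p.1 * Pa p.2)
        = ∑ p ∈ s, g p * (Pa p.1 * p.2) + ∑ p ∈ s, g p * (p.1 * Pa p.2) := by
      rw [← Finset.sum_add_distrib]
      apply Finset.sum_congr rfl; intro p _; ring
    rw [hsplit] at h1
    rw [hgroup Pa (fun y => y)] at h1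
    rw [hgroup (fun x => x) Pa] at h1
    have e1 : ∑ b ∈ B, b * ∑ x ∈ X, g (x, b) * Pa x = ∑ b ∈ B, b * μ b := by
      apply Finset.sum_congr rfl; intro b _; rw [hμdef]
    have e2 : ∑ b ∈ B, Pa b * ∑ x ∈ X, g (x, b) * x = ∑ b ∈ B, Pa b * mf b := by
      apply Finset.sum_congr rfl; intro b _; rw [hmdef]
    rw [e1, e2, hPa1, hPa0] at h1
    linarith [h1]
  -- K4 : μ = (a-1) * Sf
  have hK4 : ∀ b : ℝ, μ b = (a - 1) * Sf b := by
    intro b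
    rw [hμdef, hSdef]
    simp only
    rw [Finset.mul_sum]
    apply Finset.sum_congr rfl
    intro x _
    have hx : Pa x = (a - 1) * (x / (x + (a - 2))) := by
      rw [hPadef]
      simp only
      rw [show x * a - x = (a - 1) * x by ring, show x + a - 2 = x + (a - 2) by ring,
        mul_div_assoc]
    rw [hx]; ring
  have hμ0 : ∀ b : ℝ, 0 ≤ μ b := by
    intro b; rw [hK4 b]
    exact mul_nonneg (by linarith) (hrowS b)
  have hμsum : ∑ b ∈ B, μ b = (a - 1) * (2 / (a - 1) - (2 - τ) / (a - τ)) := by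
    rw [← hK2, Finset.mul_sum]
    apply Finset.sum_congr rfl
    intro b _; exact hK4 b
  -- gap function
  set gap : ℝ → ℝ := fun b => a ^ 2 / (4 * (a - 1)) + (a - 2) / (4 * (a - 1)) * b - Pa b
    with hgapdef
  have hgap_id : ∀ b : ℝ, 0 ≤ b →
      gap b = ((a - 1) * (a - 2) * (b - a) ^ 2) / ((2 * a - 2) ^ 2 * (b + a - 2)) := by
    intro b hb
    rw [hgapdef, hPadef]
    simp only
    have hd : b + a - 2 ≠ 0 := by linarith
    have h1 : a - 1 ≠ 0 := by linarith
    have h2 : (2 : ℝ) * a - 2 ≠ 0 := by linarith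
    field_simp
    ring
  have hgap0 : ∀ b : ℝ, 0 ≤ b → 0 ≤ gap b := by
    intro b hb
    rw [hgap_id b hb]
    have hd : (0:ℝ) < b + a - 2 := by linarith
    have h2 : (0:ℝ) < (2 * a - 2) ^ 2 := by nlinarith
    apply div_nonneg
    · have : (0:ℝ) ≤ (a-1)*(a-2) := by nlinarith
      positivity
    · positivity
  -- K7 : ∑_B gap b * μ b ≤ E
  have hK7 : ∑ b ∈ B, gap b * μ b ≤ a * (a - 2) * τ / (4 * (a - τ)) := by
    have hdecomp : ∑ b ∈ B, gap b * μ b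
        = a ^ 2 / (4 * (a - 1)) * ∑ b ∈ B, μ b
          + (a - 2) / (4 * (a - 1)) * ∑ b ∈ B, b * μ b
          - ∑ b ∈ B, Pa b * μ b := by
      rw [Finset.mul_sum, Finset.mul_sum, ← Finset.sum_add_distrib, ← Finset.sum_sub_distrib]
      apply Finset.sum_congr rfl
      intro b _
      rw [hgapdef]
      ring
    rw [hdecomp, hK1, hμsum]
    have hbμ : ∑ b ∈ B, b * μ b ≤ 2 := by
      have : 0 ≤ ∑ b ∈ B, Pa b * mf b := by
        apply Finset.sum_nonneg
        intro b hb
        exact mul_nonneg (hPa_nonneg b (hB0 b hb)) (hrowm b)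
      linarith [hK3]
    have hT1 : (0:ℝ) ≤ (a - 2) / (4 * (a - 1)) := by
      apply div_nonneg <;> linarith
    have hstep : (a - 2) / (4 * (a - 1)) * ∑ b ∈ B, b * μ b
        ≤ (a - 2) / (4 * (a - 1)) * 2 := mul_le_mul_of_nonneg_left hbμ hT1
    have hfinal : a ^ 2 / (4 * (a - 1)) * ((a - 1) * (2 / (a - 1) - (2 - τ) / (a - τ)))
        + (a - 2) / (4 * (a - 1)) * 2 - 1 = a * (a - 2) * τ / (4 * (a - τ)) := by
      have h1 : a - 1 ≠ 0 := by linarith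
      have h2 : a - τ ≠ 0 := by linarith
      field_simp
      ring
    linarith [hstep, hfinal]
  -- profile of a slice
  have hμout : ∀ b : ℝ, b ∉ B → μ b = 0 := by
    intro b hbB
    rw [hμdef]
    apply Finset.sum_eq_zero
    intro x _
    have hg0 : g (x, b) = 0 := by
      by_contra hh; exact hbB (hgrow b x hh).2
    rw [hg0, zero_mul]
  have hprof : ∀ b : ℝ,
      prof2 (hslice g b) ((a : ℝ) : EReal) ((a : ℝ) : EReal) = Pa b * μ b := by
    intro b
    rw [prof2]
    have hsub2 : Function.support
        (fun p : ℝ × ℝ => hslice g b p * Pfun p.1 ((a : ℝ) : EReal) * Pfun p.2 ((a : ℝ) : EReal))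
        ⊆ ↑s := by
      intro p hp
      apply hsupp
      intro h0
      apply hp
      show hslice g b p * _ * _ = 0
      rw [hslice]
      rw [h0, ite_self, zero_mul, zero_mul]
    rw [finsum_eq_sum_of_support_subset _ hsub2]
    have hterm : ∀ p ∈ s, hslice g b p * Pfun p.1 ((a : ℝ) : EReal) * Pfun p.2 ((a : ℝ) : EReal)
        = g p * (Pa p.1 * (if p.2 = b then Pa p.2 else 0)) := by
      intro p _
      rw [hslice, hPfun, hPfun]
      split_ifs <;> ring
    rw [Finset.sum_congr rfl hterm]
    rw [hgroup Pa (fun y => if y = b then Pa y else 0)]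
    have hterm2 : ∀ y ∈ B, (if y = b then Pa y else 0) * ∑ x ∈ X, g (x, y) * Pa x
        = if y = b then Pa y * μ y else 0 := by
      intro y _
      split_ifs
      · rw [hμdef]
      · rw [zero_mul]
    rw [Finset.sum_congr rfl hterm2]
    rw [Finset.sum_ite_eq' B b (fun y => Pa y * μ y)]
    split_ifs with hbB
    · rfl
    · rw [hμout b hbB, mul_zero]
  -- convert the target finsum to a finset sum
  have htarget : ∑ᶠ b ∈ {b : ℝ | |b - a| < 1000 * Real.sqrt τ},
      prof2 (hslice g b) ((a : ℝ) : EReal) ((a : ℝ) : EReal)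
      = ∑ b ∈ B.filter (fun b => |b - a| < 1000 * Real.sqrt τ), Pa b * μ b := by
    rw [finsum_mem_def]
    have hindsupp : Function.support
        (Set.indicator {b : ℝ | |b - a| < 1000 * Real.sqrt τ}
          (fun b => prof2 (hslice g b) ((a : ℝ) : EReal) ((a : ℝ) : EReal))) ⊆ ↑B := by
      intro b hb
      rw [Set.support_indicator] at hb
      have hb2 : prof2 (hslice g b) ((a : ℝ) : EReal) ((a : ℝ) : EReal) ≠ 0 := hb.2
      rw [hprof b] at hb2
      by_contra hbB
      rw [hμout b hbB, mul_zero] at hb2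
      exact hb2 rfl
    rw [finsum_eq_sum_of_support_subset _ hindsupp]
    have hterm3 : ∀ b ∈ B, Set.indicator {b : ℝ | |b - a| < 1000 * Real.sqrt τ}
        (fun b => prof2 (hslice g b) ((a : ℝ) : EReal) ((a : ℝ) : EReal)) b
        = if |b - a| < 1000 * Real.sqrt τ then Pa b * μ b else 0 := by
      intro b _
      rw [Set.indicator_apply]
      simp only [Set.mem_setOf_eq]
      split_ifs
      · exact hprof b
      · rfl
    rw [Finset.sum_congr rfl hterm3]
    rw [← Finset.sum_filter]
  rw [htarget]
  -- split into near and far parts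
  have hsplit := Finset.sum_filter_add_sum_filter_not B
    (fun b => |b - a| < 1000 * Real.sqrt τ) (fun b => Pa b * μ b)
  rw [hK1] at hsplit
  suffices hFAR : ∑ b ∈ B.filter (fun b => ¬ |b - a| < 1000 * Real.sqrt τ), Pa b * μ b ≤ 1/3 by
    linarith
  -- the far-sum machinery
  have hsq : Real.sqrt τ * Real.sqrt τ = τ := Real.mul_self_sqrt hτ0.le
  have hsqrt_pos : 0 < Real.sqrt τ := Real.sqrt_pos.2 hτ0
  have hEbound : a * (a - 2) * τ / (4 * (a - τ)) ≤ 15/8 * τ := by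
    have h0 : a * (a - 2) * τ / (4 * (a - τ)) ≤ 15 * τ / 8 := by
      apply div_le_div₀ (by linarith)
        (by linarith [mul_nonneg (mul_nonneg (show (0:ℝ) ≤ 5 - a by linarith)
          (show (0:ℝ) ≤ a + 3 by linarith)) hτ0.le])
        (by norm_num) (by linarith)
    linarith
  have hFARbound : ∀ R : ℝ, 0 ≤ R →
      (∀ b ∈ B.filter (fun b => ¬ |b - a| < 1000 * Real.sqrt τ), Pa b ≤ R * gap b) →
      ∑ b ∈ B.filter (fun b => ¬ |b - a| < 1000 * Real.sqrt τ), Pa b * μ b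
        ≤ R * (a * (a - 2) * τ / (4 * (a - τ))) := by
    intro R hR hpt
    calc ∑ b ∈ B.filter (fun b => ¬ |b - a| < 1000 * Real.sqrt τ), Pa b * μ b
        ≤ ∑ b ∈ B.filter (fun b => ¬ |b - a| < 1000 * Real.sqrt τ), R * (gap b * μ b) := by
          apply Finset.sum_le_sum
          intro b hb
          calc Pa b * μ b ≤ R * gap b * μ b :=
                mul_le_mul_of_nonneg_right (hpt b hb) (hμ0 b)
          _ = R * (gap b * μ b) := by ring
      _ = R * ∑ b ∈ B.filter (fun b => ¬ |b - a| < 1000 * Real.sqrt τ), gap b * μ b := by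
          rw [Finset.mul_sum]
      _ ≤ R * ∑ b ∈ B, gap b * μ b := by
          apply mul_le_mul_of_nonneg_left _ hR
          apply Finset.sum_le_sum_of_subset_of_nonneg (Finset.filter_subset _ _)
          intro b hb _
          exact mul_nonneg (hgap0 b (hB0 b hb)) (hμ0 b)
      _ ≤ R * (a * (a - 2) * τ / (4 * (a - τ))) := mul_le_mul_of_nonneg_left hK7 hR
  have hcross : ∀ R b : ℝ, 0 ≤ b → b * (2*a - 2)^2 ≤ R * ((a - 2) * (b - a)^2) →
      Pa b ≤ R * gap b := by
    intro R b hb hcore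
    rw [hgap_id b hb, hPadef]
    simp only
    rw [← mul_div_assoc]
    rw [div_le_div_iff₀ (by linarith : (0:ℝ) < b + a - 2)
      (mul_pos (pow_pos (by linarith : (0:ℝ) < 2 * a - 2) 2)
        (show (0:ℝ) < b + a - 2 by linarith))]
    have h2 := mul_le_mul_of_nonneg_right hcore
      (mul_nonneg (show (0:ℝ) ≤ a - 1 by linarith)
        (show (0:ℝ) ≤ b + a - 2 by linarith))
    calc (b * a - b) * ((2 * a - 2)^2 * (b + a - 2))
        = b * (2*a - 2)^2 * ((a - 1) * (b + a - 2)) := by ring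
      _ ≤ R * ((a - 2) * (b - a)^2) * ((a - 1) * (b + a - 2)) := h2
      _ = R * ((a - 1) * (a - 2) * (b - a)^2) * (b + a - 2) := by ring
  by_cases hc : Real.sqrt τ ≤ 1/200
  · -- Case A : τ small
    have hτs : τ ≤ 1/40000 := by
      have h := mul_le_mul hc hc (Real.sqrt_nonneg τ) (by norm_num)
      rw [hsq] at h
      linarith
    have hd0 : (0:ℝ) ≤ 640/(1000000*τ) := div_nonneg (by norm_num) (by linarith)
    have hRA0 : (0:ℝ) ≤ 640/(1000000*τ) + 43 := by linarith
    have hpt : ∀ b ∈ B.filter (fun b => ¬ |b - a| < 1000 * Real.sqrt τ),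
        Pa b ≤ (640/(1000000*τ) + 43) * gap b := by
      intro b hb
      rcases Finset.mem_filter.1 hb with ⟨hbB, hfarb⟩
      have hb0 := hB0 b hbB
      apply hcross _ b hb0
      have hdist : 1000000 * τ ≤ (b - a)^2 := by
        have h1 : 1000 * Real.sqrt τ ≤ |b - a| := not_lt.1 hfarb
        have h2 : (1000 * Real.sqrt τ)^2 ≤ |b - a|^2 :=
          pow_le_pow_left₀ (by positivity) h1 2
        rw [sq_abs] at h2
        have h3 : (1000 * Real.sqrt τ)^2 = 1000000 * τ := by
          rw [mul_pow, Real.sq_sqrt hτ0.le]; norm_num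
        linarith
      have hQ0 : (0:ℝ) ≤ (a - 2) * (b - a)^2 :=
        mul_nonneg (by linarith) (sq_nonneg _)
      have hQ : 1000000 * τ ≤ (a - 2) * (b - a)^2 := by
        linarith [mul_nonneg (show (0:ℝ) ≤ a - 3 by linarith) (sq_nonneg (b - a))]
      have hkey : 640/(1000000*τ) * (1000000*τ) = 640 :=
        div_mul_cancel₀ _ (by intro h; linarith [h] : (1000000*τ : ℝ) ≠ 0)
      rcases le_or_gt b (2*a) with hble | hbgt
      · have he1 : (2*a - 2)^2 ≤ 64 := by
          linarith [mul_nonneg (show (0:ℝ) ≤ 5 - a by linarith)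
            (show (0:ℝ) ≤ a - 3 by linarith)]
        have hL : b * (2*a - 2)^2 ≤ 640 := by
          calc b * (2*a - 2)^2 ≤ 10 * 64 :=
                mul_le_mul (by linarith) he1 (sq_nonneg _) (by norm_num)
          _ = 640 := by norm_num
        have hR1 : 640/(1000000*τ) * (1000000*τ) ≤ 640/(1000000*τ) * ((a - 2) * (b - a)^2) :=
          mul_le_mul_of_nonneg_left hQ hd0
        linarith [mul_nonneg (show (0:ℝ) ≤ 43 by norm_num) hQ0]
      · have h1 : b/2 ≤ b - a := by linarith
        have h2 : (b/2)^2 ≤ (b - a)^2 := pow_le_pow_left₀ (by linarith) h1 2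
        have he1 : (2*a - 2)^2 ≤ 64 := by
          linarith [mul_nonneg (show (0:ℝ) ≤ 5 - a by linarith)
            (show (0:ℝ) ≤ a - 3 by linarith)]
        have hL : b * (2*a - 2)^2 ≤ 64 * b := by
          linarith [mul_le_mul_of_nonneg_left he1 hb0]
        have hM : 3/2 * b ≤ (a - 2) * (b - a)^2 := by
          linarith [h2, mul_nonneg (show (0:ℝ) ≤ b - 2*a by linarith) hb0,
            mul_nonneg (show (0:ℝ) ≤ a - 3 by linarith) (sq_nonneg (b - a)),
            mul_nonneg (show (0:ℝ) ≤ a - 3 by linarith) hb0]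
        linarith [mul_nonneg hd0 hQ0]
    have hfb := hFARbound _ hRA0 hpt
    have hRE : (640/(1000000*τ) + 43) * (a * (a - 2) * τ / (4 * (a - τ))) ≤ 1/3 := by
      have h1 : (640/(1000000*τ) + 43) * (a * (a - 2) * τ / (4 * (a - τ)))
          ≤ (640/(1000000*τ) + 43) * (15/8 * τ) :=
        mul_le_mul_of_nonneg_left hEbound hRA0
      have hτne : τ ≠ 0 := ne_of_gt hτ0
      have h2 : (640/(1000000*τ) + 43) * (15/8 * τ) = 1200/1000000 + 645/8 * τ := by
        field_simp
        ring
      rw [h2] at h1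
      linarith
    linarith
  · -- Case B : τ not too small
    push_neg at hc
    have hρ5 : (5:ℝ) ≤ 1000 * Real.sqrt τ := by linarith
    have hsle1 : Real.sqrt τ ≤ 1 := by
      nlinarith [sq_nonneg (Real.sqrt τ - 1), hsq]
    have hsne : Real.sqrt τ ≠ 0 := ne_of_gt hsqrt_pos
    have hRB0 : (0:ℝ) ≤ 128/(1000 * Real.sqrt τ) :=
      div_nonneg (by norm_num) (by positivity)
    have hpt : ∀ b ∈ B.filter (fun b => ¬ |b - a| < 1000 * Real.sqrt τ),
        Pa b ≤ (128/(1000 * Real.sqrt τ)) * gap b := by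
      intro b hb
      rcases Finset.mem_filter.1 hb with ⟨hbB, hfarb⟩
      have hb0 := hB0 b hbB
      apply hcross _ b hb0
      rcases eq_or_lt_of_le hb0 with hb0' | hb0'
      · rw [← hb0']
        have : (0:ℝ) ≤ (128/(1000 * Real.sqrt τ)) * ((a - 2) * (0 - a)^2) := by
          apply mul_nonneg hRB0
          exact mul_nonneg (by linarith) (sq_nonneg _)
        linarith [this]
      · have h1 : 1000 * Real.sqrt τ ≤ |b - a| := not_lt.1 hfarb
        have hright : 1000 * Real.sqrt τ ≤ b - a := by
          rcases le_abs.1 h1 with h | h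
          · exact h
          · linarith
        have he0 : b ≤ 2 * (b - a) := by linarith
        have he64 : (2*a - 2)^2 ≤ 64 := by
          linarith [mul_nonneg (show (0:ℝ) ≤ 5 - a by linarith)
            (show (0:ℝ) ≤ a - 3 by linarith)]
        have he1 : b * (2*a - 2)^2 ≤ 128 * (b - a) := by
          calc b * (2*a - 2)^2 ≤ (2 * (b - a)) * 64 :=
                mul_le_mul he0 he64 (sq_nonneg _) (by linarith)
          _ = 128 * (b - a) := by ring
        have hk1 : (1000 * Real.sqrt τ) * (b - a) ≤ (b - a)^2 := by
          linarith [mul_nonneg (show (0:ℝ) ≤ b - a - 1000 * Real.sqrt τ by linarith)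
            (show (0:ℝ) ≤ b - a by linarith)]
        have hk2 : (b - a)^2 ≤ (a - 2) * (b - a)^2 := by
          linarith [mul_nonneg (show (0:ℝ) ≤ a - 3 by linarith) (sq_nonneg (b - a))]
        have hk3 : 128/(1000 * Real.sqrt τ) * ((1000 * Real.sqrt τ) * (b - a))
            ≤ 128/(1000 * Real.sqrt τ) * ((a - 2) * (b - a)^2) :=
          mul_le_mul_of_nonneg_left (hk1.trans hk2) hRB0
        have hk4 : 128/(1000 * Real.sqrt τ) * ((1000 * Real.sqrt τ) * (b - a))
            = 128 * (b - a) := by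
          have hd : (1000 * Real.sqrt τ : ℝ) ≠ 0 :=
            ne_of_gt (by linarith [hsqrt_pos])
          rw [show 128/(1000 * Real.sqrt τ) * ((1000 * Real.sqrt τ) * (b - a))
            = 128/(1000 * Real.sqrt τ) * (1000 * Real.sqrt τ) * (b - a) from by ring,
            div_mul_cancel₀ _ hd]
        linarith
    have hfb := hFARbound _ hRB0 hpt
    have hRE : (128/(1000 * Real.sqrt τ)) * (a * (a - 2) * τ / (4 * (a - τ))) ≤ 1/3 := by
      have h1 : (128/(1000 * Real.sqrt τ)) * (a * (a - 2) * τ / (4 * (a - τ)))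
          ≤ (128/(1000 * Real.sqrt τ)) * (15/8 * τ) :=
        mul_le_mul_of_nonneg_left hEbound hRB0
      have h2 : (128/(1000 * Real.sqrt τ)) * (15/8 * τ) = 240/1000 * Real.sqrt τ := by
        have ht : (15:ℝ)/8 * τ = 15/8 * (Real.sqrt τ * Real.sqrt τ) := by rw [hsq]
        rw [ht]
        have hd : (Real.sqrt τ : ℝ) ≠ 0 := ne_of_gt hsqrt_pos
        field_simp
        norm_num
      rw [h2] at h1
      linarith
    linarith

end
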